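/- For every natural number n ≥ 1, S(n,n) = C(n,n). -/

import Mathlib

/-- `S(l,n) = (-1)^n * ∑_{i=0}^{n} ∑_{p=0}^{i} (-1)^p * binom(n+1, i-p) * p^l`,
with the convention `0^0 = 1`. -/
def S (l n : ℕ) : ℚ :=
  (-1) ^ n * ∑ i ∈ Finset.range (n + 1), ∑ p ∈ Finset.range (i + 1),
    (-1) ^ p * (Nat.choose (n + 1) (i - p) : ℚ) * (p : ℚ) ^ l

/-- `C(l,n) = (-1)^(n-l) * ∑_{k=1}^{n} ((2^n - 2^(n-k))/(k+1))
  * ∑_{t=0}^{k+1} (-1)^t * binom(k+1, t) * t^(l+1)`. -/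
def C (l n : ℕ) : ℚ :=
  (-1) ^ (n - l) * ∑ k ∈ Finset.Icc 1 n,
    (((2 : ℚ) ^ n - (2 : ℚ) ^ (n - k)) / (k + 1)) *
      ∑ t ∈ Finset.range (k + 2), (-1) ^ t * (Nat.choose (k + 1) t : ℚ) * (t : ℚ) ^ (l + 1)

namespace Tan6Aux

open Finset

lemma alt_pow (N m : ℕ) (h : m < N) :
    ∑ i ∈ range (N+1), (-1:ℚ)^i * (N.choose i : ℚ) * (i:ℚ)^m = 0 := by
  induction m using Nat.strong_induction_on generalizing N with
  | _ m ih =>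
    rcases Nat.eq_zero_or_pos m with hm | hm
    · subst hm
      have h0 : N ≠ 0 := by omega
      have h1 := Int.alternating_sum_range_choose_of_ne h0
      have h2 : ((∑ i ∈ range (N + 1), ((-1) ^ i * N.choose i : ℤ) : ℤ) : ℚ) = 0 := by
        rw [h1]; simp
      push_cast at h2
      simpa using h2
    · obtain ⟨m, rfl⟩ : ∃ m', m = m' + 1 := ⟨m - 1, by omega⟩
      obtain ⟨M, rfl⟩ : ∃ M, N = M + 1 := ⟨N - 1, by omega⟩
      rw [Finset.sum_range_succ']
      simp only [Nat.cast_zero, zero_pow (Nat.succ_ne_zero m), mul_zero, add_zero]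
      have key : ∀ j : ℕ, (-1:ℚ)^(j+1) * (((M+1).choose (j+1) : ℕ) : ℚ) * (((j+1:ℕ)):ℚ)^(m+1)
          = (-((M:ℚ)+1)) * ((-1:ℚ)^j * (M.choose j : ℚ) * ((j:ℚ)+1)^m) := by
        intro j
        have hc : (((M+1).choose (j+1) : ℕ) : ℚ) * ((j:ℚ)+1) = ((M:ℚ)+1) * (M.choose j : ℚ) := by
          have h3 : (M+1) * M.choose j = (M+1).choose (j+1) * (j+1) := Nat.add_one_mul_choose_eq M j
          exact_mod_cast (congrArg (fun x : ℕ => (x : ℚ)) h3).symm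
        push_cast
        linear_combination ((-1:ℚ)^(j+1) * ((j:ℚ)+1)^m) * hc
      rw [Finset.sum_congr rfl (fun j _ => key j), ← Finset.mul_sum]
      have hexp : ∀ j : ℕ, ((j:ℚ)+1)^m = ∑ r ∈ range (m+1), (m.choose r : ℚ) * (j:ℚ)^r := by
        intro j
        have := add_pow (j:ℚ) 1 m
        simp only [one_pow, mul_one] at this
        rw [this]
        exact Finset.sum_congr rfl fun r _ => by ring
      have inner : ∑ j ∈ range (M+1), (-1:ℚ)^j * (M.choose j : ℚ) * ((j:ℚ)+1)^m = 0 := by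
        calc ∑ j ∈ range (M+1), (-1:ℚ)^j * (M.choose j : ℚ) * ((j:ℚ)+1)^m
            = ∑ j ∈ range (M+1), ∑ r ∈ range (m+1),
                (m.choose r : ℚ) * ((-1:ℚ)^j * (M.choose j : ℚ) * (j:ℚ)^r) := by
              refine Finset.sum_congr rfl fun j _ => ?_
              rw [hexp j, Finset.mul_sum]
              exact Finset.sum_congr rfl fun r _ => by ring
          _ = ∑ r ∈ range (m+1), (m.choose r : ℚ) *
                ∑ j ∈ range (M+1), (-1:ℚ)^j * (M.choose j : ℚ) * (j:ℚ)^r := by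
              rw [Finset.sum_comm]
              exact Finset.sum_congr rfl fun r _ => (Finset.mul_sum _ _ _).symm
          _ = 0 := by
              refine Finset.sum_eq_zero fun r hr => ?_
              have hr' : r < m + 1 := mem_range.mp hr
              rw [ih r hr' M (by omega), mul_zero]
      rw [inner, mul_zero]

lemma alt_pow_shift (n : ℕ) (c : ℚ) :
    ∑ i ∈ range (n+2), (-1:ℚ)^i * ((n+1).choose i : ℚ) * (c + i)^n = 0 := by
  have hexp : ∀ i : ℕ, (c + i)^n = ∑ r ∈ range (n+1), (n.choose r : ℚ) * c^(n-r) * (i:ℚ)^r := by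
    intro i
    have := add_pow (i:ℚ) c n
    rw [add_comm] at this
    rw [this]
    exact Finset.sum_congr rfl fun r _ => by ring
  calc ∑ i ∈ range (n+2), (-1:ℚ)^i * ((n+1).choose i : ℚ) * (c + i)^n
      = ∑ i ∈ range (n+2), ∑ r ∈ range (n+1),
          (n.choose r : ℚ) * c^(n-r) * ((-1:ℚ)^i * ((n+1).choose i : ℚ) * (i:ℚ)^r) := by
        refine Finset.sum_congr rfl fun i _ => ?_
        rw [hexp i, Finset.mul_sum]
        exact Finset.sum_congr rfl fun r _ => by ring
    _ = ∑ r ∈ range (n+1), (n.choose r : ℚ) * c^(n-r) *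
          ∑ i ∈ range (n+2), (-1:ℚ)^i * ((n+1).choose i : ℚ) * (i:ℚ)^r := by
        rw [Finset.sum_comm]
        exact Finset.sum_congr rfl fun r _ => (Finset.mul_sum _ _ _).symm
    _ = 0 := by
        refine Finset.sum_eq_zero fun r hr => ?_
        have hr' : r < n + 1 := mem_range.mp hr
        rw [alt_pow (n+1) r (by omega), mul_zero]

noncomputable def dd (n j : ℕ) (x : ℚ) : ℚ :=
  ∑ t ∈ range (j+1), (-1:ℚ)^t * (j.choose t : ℚ) * (x + t + 1)^n

noncomputable def qf (n : ℕ) (x : ℚ) : ℚ :=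
  ∑ j ∈ range (n+1), (2:ℚ)⁻¹^(j+1) * dd n j x

lemma dd_zero (n : ℕ) (x : ℚ) : dd n 0 x = (x+1)^n := by
  simp [dd]

lemma dd_succ (n j : ℕ) (x : ℚ) : dd n (j+1) x = dd n j x - dd n j (x+1) := by
  set f : ℕ → ℚ := fun t => (-1:ℚ)^t * (j.choose t : ℚ) * (x + t + 1)^n with hf
  have e1 := Finset.sum_range_succ' f (j+1)
  have e2 := Finset.sum_range_succ f (j+1)
  have hdd : dd n j x = ∑ t ∈ range (j+1), f t := rfl
  have hfj : f (j+1) = 0 := by simp [hf, Nat.choose_succ_self]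
  have hf0 : f 0 = (x+1)^n := by simp [hf]
  have h4 : ∑ s ∈ range (j+1), f (s+1) = dd n j x - (x+1)^n := by
    rw [hdd]; rw [hfj] at e2; rw [hf0] at e1; linarith
  have h1 : dd n (j+1) x
      = (∑ s ∈ range (j+1), (-1:ℚ)^(s+1) * ((j+1).choose (s+1) : ℚ) * (x + (s+1:ℕ) + 1)^n)
        + (-1:ℚ)^0 * ((j+1).choose 0 : ℚ) * (x + (0:ℕ) + 1)^n := by
    rw [dd, Finset.sum_range_succ']
  have h2 : ∀ s : ℕ, (-1:ℚ)^(s+1) * ((j+1).choose (s+1) : ℚ) * (x + (s+1:ℕ) + 1)^n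
      = -((-1:ℚ)^s * (j.choose s : ℚ) * ((x+1) + s + 1)^n) + f (s+1) := by
    intro s
    have hch : ((j+1).choose (s+1) : ℚ) = (j.choose s : ℚ) + (j.choose (s+1) : ℚ) := by
      exact_mod_cast congrArg (fun y : ℕ => (y:ℚ)) (Nat.choose_succ_succ j s)
    rw [hch, hf]
    push_cast
    ring
  rw [h1, Finset.sum_congr rfl (fun s _ => h2 s), Finset.sum_add_distrib, h4]
  have h3 : ∑ s ∈ range (j+1), -((-1:ℚ)^s * (j.choose s : ℚ) * ((x+1) + s + 1)^n)
      = - dd n j (x+1) := by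
    rw [dd, ← Finset.sum_neg_distrib]
  rw [h3]
  simp only [Nat.choose_zero_right, Nat.cast_one, Nat.cast_zero, pow_zero, one_mul, add_zero]
  ring

lemma dd_top (n : ℕ) (x : ℚ) : dd n (n+1) x = 0 := by
  have := alt_pow_shift n (x+1)
  rw [dd]
  rw [← this]
  exact Finset.sum_congr rfl fun t _ => by ring

lemma qf_feq (n : ℕ) (x : ℚ) : qf n (x+1) + qf n x = (x+1)^n := by
  have key : ∀ j : ℕ, (2:ℚ)⁻¹^(j+1) * dd n j (x+1) + (2:ℚ)⁻¹^(j+1) * dd n j x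
      = (2:ℚ)⁻¹^j * dd n j x - (2:ℚ)⁻¹^(j+1) * dd n (j+1) x := by
    intro j
    rw [dd_succ n j x]
    have h2 : (2:ℚ)⁻¹^j = 2 * (2:ℚ)⁻¹^(j+1) := by
      rw [pow_succ]; ring
    rw [h2]; ring
  have := Finset.sum_range_sub' (fun j => (2:ℚ)⁻¹^j * dd n j x) (n+1)
  calc qf n (x+1) + qf n x
      = ∑ j ∈ range (n+1), ((2:ℚ)⁻¹^(j+1) * dd n j (x+1) + (2:ℚ)⁻¹^(j+1) * dd n j x) := by
        rw [qf, qf, ← Finset.sum_add_distrib]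
    _ = ∑ j ∈ range (n+1), ((2:ℚ)⁻¹^j * dd n j x - (2:ℚ)⁻¹^(j+1) * dd n (j+1) x) := by
        exact Finset.sum_congr rfl fun j _ => key j
    _ = (2:ℚ)⁻¹^0 * dd n 0 x - (2:ℚ)⁻¹^(n+1) * dd n (n+1) x := this
    _ = (x+1)^n := by rw [dd_zero, dd_top]; norm_num

lemma qf_feq' (n : ℕ) (x : ℚ) : qf n x + qf n (x-1) = x^n := by
  have := qf_feq n (x-1)
  simpa using this

lemma qf_alt (n : ℕ) (x : ℚ) :
    ∑ i ∈ range (n+2), (-1:ℚ)^i * ((n+1).choose i : ℚ) * qf n (x + i) = 0 := by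
  have swap : ∑ i ∈ range (n+2), (-1:ℚ)^i * ((n+1).choose i : ℚ) * qf n (x + i)
      = ∑ j ∈ range (n+1), (2:ℚ)⁻¹^(j+1) * ∑ t ∈ range (j+1), (-1:ℚ)^t * (j.choose t : ℚ) *
          ∑ i ∈ range (n+2), (-1:ℚ)^i * ((n+1).choose i : ℚ) * ((x + t + 1) + i)^n := by
    simp only [qf, dd, Finset.mul_sum]
    rw [Finset.sum_comm]
    refine Finset.sum_congr rfl fun j _ => ?_
    rw [Finset.sum_comm]
    refine Finset.sum_congr rfl fun t _ => ?_
    refine Finset.sum_congr rfl fun i _ => ?_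
    have : x + i + t + 1 = x + t + 1 + i := by ring
    rw [this]
    ring
  rw [swap]
  refine Finset.sum_eq_zero fun j _ => ?_
  rw [Finset.sum_eq_zero fun t _ => ?_, mul_zero]
  rw [alt_pow_shift n (x + t + 1), mul_zero]

noncomputable def QP (n : ℕ) : Polynomial ℚ :=
  ∑ j ∈ range (n+1), Polynomial.C ((2:ℚ)⁻¹^(j+1)) *
    ∑ t ∈ range (j+1), Polynomial.C ((-1:ℚ)^t * (j.choose t : ℚ)) *
      (Polynomial.X + Polynomial.C ((t:ℚ)+1))^n

lemma QP_eval (n : ℕ) (x : ℚ) : (QP n).eval x = qf n x := by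
  rw [QP, qf, Polynomial.eval_finset_sum]
  refine Finset.sum_congr rfl fun j _ => ?_
  rw [Polynomial.eval_mul, Polynomial.eval_C, dd, Polynomial.eval_finset_sum]
  congr 1
  refine Finset.sum_congr rfl fun t _ => ?_
  simp only [Polynomial.eval_mul, Polynomial.eval_C, Polynomial.eval_pow,
    Polynomial.eval_add, Polynomial.eval_X]
  ring

lemma qf_symm (n : ℕ) (hn : Even n) (x : ℚ) : qf n (-1 - x) = qf n x := by
  set s : Polynomial ℚ := QP n - (QP n).comp (Polynomial.C (-1) - Polynomial.X) with hs
  have hs_eval : ∀ y : ℚ, s.eval y = qf n y - qf n (-1 - y) := by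
    intro y
    simp [hs, Polynomial.eval_comp, QP_eval]
  have hfe : ∀ y : ℚ, s.eval y = - s.eval (y - 1) := by
    intro y
    have h1 : qf n y + qf n (y-1) = y^n := qf_feq' n y
    have h2 : qf n (-y) + qf n (-y-1) = (-y)^n := qf_feq' n (-y)
    have h3 : (-y)^n = y^n := hn.neg_pow y
    rw [hs_eval, hs_eval]
    have e1 : (-1 : ℚ) - (y - 1) = -y := by ring
    have e2 : (-1 : ℚ) - y = -y - 1 := by ring
    rw [e1, e2]
    linarith
  have h2step : ∀ y : ℚ, s.eval y = s.eval (y - 2) := by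
    intro y
    rw [hfe y, hfe (y-1)]
    have : y - 1 - 1 = y - 2 := by ring
    rw [this, neg_neg]
  have hg : ∀ k : ℕ, s.eval (-(2*(k:ℚ))) = s.eval 0 := by
    intro k
    induction k with
    | zero => norm_num
    | succ k ih =>
      have : -(2*((k+1:ℕ):ℚ)) = -(2*(k:ℚ)) - 2 := by push_cast; ring
      rw [this, ← h2step, ih]
  have hconst : s = Polynomial.C (s.eval 0) := by
    apply Polynomial.eq_of_infinite_eval_eq
    apply Set.Infinite.mono (s := Set.range (fun k : ℕ => -(2*(k:ℚ))))
    · rintro y ⟨k, rfl⟩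
      simp only [Set.mem_setOf_eq, Polynomial.eval_C]
      exact hg k
    · apply Set.infinite_range_of_injective
      intro a b hab
      have : (a:ℚ) = b := by
        field_simp at hab
        linarith
      exact_mod_cast this
  have hzero : s.eval 0 = 0 := by
    have h0 := hfe 0
    have h1 : s.eval (0 - 1) = s.eval 0 := by
      rw [hconst]; simp
    rw [h1] at h0
    linarith
  have : s.eval x = 0 := by rw [hconst, hzero]; simp
  rw [hs_eval] at this
  linarith

lemma qf_neg_one (n : ℕ) (hn : 1 ≤ n) (he : Even n) : qf n (-1) = 0 := by
  have h1 : qf n 0 + qf n (0-1) = 0^n := qf_feq' n 0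
  have h2 : qf n (-1 - 0) = qf n 0 := qf_symm n he 0
  have h3 : (0:ℚ)^n = 0 := zero_pow (by omega)
  rw [h3] at h1
  norm_num at h1 h2
  linarith

noncomputable def Gs (n j : ℕ) : ℚ := ∑ p ∈ range (j+1), (-1:ℚ)^p * (p:ℚ)^n

noncomputable def Zs (n : ℕ) : ℚ := ∑ j ∈ range (n+1), ((n+1).choose (j+1) : ℚ) * Gs n j

noncomputable def Rs (n k : ℕ) : ℚ := ∑ t ∈ range (k+1), (-1:ℚ)^t * (k.choose t : ℚ) * (t:ℚ)^n

lemma Gs_eq (n : ℕ) (hn : 1 ≤ n) (j : ℕ) : Gs n j = (-1:ℚ)^j * qf n j + qf n (-1) := by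
  induction j with
  | zero =>
    have h1 : qf n 0 + qf n (0-1) = 0^n := qf_feq' n 0
    have h3 : (0:ℚ)^n = 0 := zero_pow (by omega)
    rw [h3] at h1
    norm_num at h1 ⊢
    simp [Gs, h3]
    linarith
  | succ j ih =>
    rw [Gs, Finset.sum_range_succ, ← Gs, ih]
    have h1 : qf n ((j:ℚ)+1) + qf n j = ((j:ℚ)+1)^n := qf_feq n j
    have hc : ((j+1:ℕ):ℚ) = (j:ℚ)+1 := by push_cast; ring
    rw [hc]
    linear_combination ((-1:ℚ)^j) * h1

lemma sum_choose_tail (n : ℕ) : ∑ j ∈ range (n+1), (((n+1).choose (j+1) : ℕ) : ℚ) = 2^(n+1) - 1 := by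
  have h1 : ∑ i ∈ range (n+2), ((n+1).choose i : ℕ) = 2^(n+1) := Nat.sum_range_choose (n+1)
  have h2 := Finset.sum_range_succ' (fun i => (((n+1).choose i : ℕ) : ℚ)) (n+1)
  have h1' : ∑ i ∈ range (n+2), (((n+1).choose i : ℕ) : ℚ) = 2^(n+1) := by
    exact_mod_cast congrArg (fun x : ℕ => (x:ℚ)) h1
  rw [h1'] at h2
  simp only [Nat.choose_zero_right, Nat.cast_one] at h2
  linarith

lemma Zs_eq (n : ℕ) (hn : 1 ≤ n) : Zs n = 2^(n+1) * qf n (-1) := by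
  have key : ∑ j ∈ range (n+1), (-1:ℚ)^j * ((n+1).choose (j+1) : ℚ) * qf n j = qf n (-1) := by
    have h0 := qf_alt n (-1)
    have h2 := Finset.sum_range_succ' (fun i => (-1:ℚ)^i * ((n+1).choose i : ℚ) * qf n (-1 + i)) (n+1)
    rw [h0] at h2
    simp only [Nat.choose_zero_right, Nat.cast_one, pow_zero, Nat.cast_zero, add_zero, one_mul,
      mul_one] at h2
    have h3 : ∀ j : ℕ, (-1:ℚ)^(j+1) * ((n+1).choose (j+1) : ℚ) * qf n (-1 + ((j+1:ℕ):ℚ))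
        = -((-1:ℚ)^j * ((n+1).choose (j+1) : ℚ) * qf n j) := by
      intro j
      have : (-1:ℚ) + ((j+1:ℕ):ℚ) = j := by push_cast; ring
      rw [this, pow_succ]
      ring
    rw [Finset.sum_congr rfl (fun j _ => h3 j), Finset.sum_neg_distrib] at h2
    -- h2 : 0 = -∑ ... + qf n (-1)
    linarith [h2]
  calc Zs n = ∑ j ∈ range (n+1), ((n+1).choose (j+1) : ℚ) * ((-1:ℚ)^j * qf n j + qf n (-1)) := by
        rw [Zs]
        exact Finset.sum_congr rfl fun j _ => by rw [Gs_eq n hn j]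
    _ = ∑ j ∈ range (n+1), ((-1:ℚ)^j * ((n+1).choose (j+1) : ℚ) * qf n j
          + (((n+1).choose (j+1) : ℕ) : ℚ) * qf n (-1)) := by
        exact Finset.sum_congr rfl fun j _ => by push_cast; ring
    _ = (∑ j ∈ range (n+1), (-1:ℚ)^j * ((n+1).choose (j+1) : ℚ) * qf n j)
        + (∑ j ∈ range (n+1), (((n+1).choose (j+1) : ℕ) : ℚ)) * qf n (-1) := by
        rw [Finset.sum_add_distrib, Finset.sum_mul]
    _ = qf n (-1) + (2^(n+1) - 1) * qf n (-1) := by rw [key, sum_choose_tail]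
    _ = 2^(n+1) * qf n (-1) := by ring

lemma stepB (n p : ℕ) (hp : p ≤ n) :
    ∑ i ∈ Ico p (n+1), (n+1).choose (i-p) = ∑ i ∈ Ico (p+1) (n+2), (n+1).choose i := by
  rw [Finset.sum_Ico_eq_sum_range, Finset.sum_Ico_eq_sum_range]
  have h1 : n + 2 - (p+1) = n + 1 - p := by omega
  rw [h1]
  rw [← Finset.sum_range_reflect (fun j => (n+1).choose (p+1+j)) (n+1-p)]
  refine Finset.sum_congr rfl fun j hj => ?_
  have hj' : j < n+1-p := mem_range.mp hj
  have e2 : p + j - p = j := by omega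
  rw [e2]
  have e3 : p + 1 + (n + 1 - p - 1 - j) = (n+1) - j := by omega
  rw [e3]
  exact (Nat.choose_symm (by omega)).symm

/-- the `p`-indexed form of `Zs` -/
lemma Zs_alt (n : ℕ) :
    ∑ p ∈ range (n+1), (-1:ℚ)^p * (p:ℚ)^n * (∑ i ∈ Ico (p+1) (n+2), ((n+1).choose i : ℚ))
      = Zs n := by
  have hF : ∀ p : ℕ, (-1:ℚ)^p * (p:ℚ)^n * (∑ i ∈ Ico (p+1) (n+2), ((n+1).choose i : ℚ))
      = ∑ i ∈ Ico (p+1) (n+2), (-1:ℚ)^p * (p:ℚ)^n * ((n+1).choose i : ℚ) := by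
    intro p; rw [Finset.mul_sum]
  have hsplit := Finset.sum_Ico_consecutive
    (fun p => ∑ i ∈ Ico (p+1) (n+2), (-1:ℚ)^p * (p:ℚ)^n * ((n+1).choose i : ℚ))
    (show (0:ℕ) ≤ n+1 by omega) (show n+1 ≤ n+2 by omega)
  have hlast : ∑ p ∈ Ico (n+1) (n+2),
      ∑ i ∈ Ico (p+1) (n+2), (-1:ℚ)^p * (p:ℚ)^n * ((n+1).choose i : ℚ) = 0 := by
    rw [Finset.sum_Ico_succ_top (by omega)]
    simp
  have hext : ∑ p ∈ range (n+1), (-1:ℚ)^p * (p:ℚ)^n * (∑ i ∈ Ico (p+1) (n+2), ((n+1).choose i : ℚ))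
      = ∑ p ∈ Ico 0 (n+2), ∑ i ∈ Ico (p+1) (n+2), (-1:ℚ)^p * (p:ℚ)^n * ((n+1).choose i : ℚ) := by
    rw [← hsplit, hlast, add_zero, Nat.Ico_zero_eq_range]
    exact Finset.sum_congr rfl fun p _ => hF p
  rw [hext, Finset.sum_Ico_Ico_comm' 0 (n+2)]
  rw [Nat.Ico_zero_eq_range, Finset.sum_range_succ']
  simp only [Finset.range_zero, Finset.sum_empty, add_zero, Nat.Ico_zero_eq_range]
  rw [Zs]
  refine Finset.sum_congr rfl fun j _ => ?_
  rw [Gs, Finset.mul_sum]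
  refine Finset.sum_congr rfl fun p _ => by ring

lemma S_eq (n : ℕ) (hn : 1 ≤ n) : S n n = (-1:ℚ)^n * Zs n := by
  rw [S]
  congr 1
  have stepA : ∑ i ∈ Finset.range (n + 1), ∑ p ∈ Finset.range (i + 1),
      (-1:ℚ) ^ p * ((n + 1).choose (i - p) : ℚ) * (p : ℚ) ^ n
      = ∑ p ∈ Ico 0 (n+1), ∑ i ∈ Ico p (n+1), (-1:ℚ)^p * ((n+1).choose (i-p) : ℚ) * (p:ℚ)^n := by
    rw [Finset.sum_Ico_Ico_comm 0 (n+1) (fun p i => (-1:ℚ)^p * ((n+1).choose (i-p) : ℚ) * (p:ℚ)^n)]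
    simp only [Nat.Ico_zero_eq_range]
  rw [stepA, ← Zs_alt n, Nat.Ico_zero_eq_range]
  refine Finset.sum_congr rfl fun p hp => ?_
  have hp' : p ≤ n := by have := mem_range.mp hp; omega
  have hBq : (∑ i ∈ Ico p (n+1), ((n+1).choose (i-p) : ℚ))
      = ∑ i ∈ Ico (p+1) (n+2), ((n+1).choose i : ℚ) := by exact_mod_cast stepB n p hp'
  calc ∑ i ∈ Ico p (n+1), (-1:ℚ)^p * ((n+1).choose (i-p) : ℚ) * (p:ℚ)^n
      = (-1:ℚ)^p * (p:ℚ)^n * ∑ i ∈ Ico p (n+1), ((n+1).choose (i-p) : ℚ) := by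
        rw [Finset.mul_sum]
        exact Finset.sum_congr rfl fun i _ => by ring
    _ = (-1:ℚ)^p * (p:ℚ)^n * ∑ i ∈ Ico (p+1) (n+2), ((n+1).choose i : ℚ) := by rw [hBq]

lemma Rs_top (n : ℕ) : Rs n (n+1) = 0 := alt_pow (n+1) n (by omega)

lemma Tk (n k : ℕ) :
    ∑ t ∈ range (k+2), (-1:ℚ)^t * ((k+1).choose t : ℚ) * (t:ℚ)^(n+1)
      = ((k:ℚ)+1) * (Rs n (k+1) - Rs n k) := by
  have hpad : Rs n k = ∑ t ∈ range (k+2), (-1:ℚ)^t * (k.choose t : ℚ) * (t:ℚ)^n := by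
    rw [Finset.sum_range_succ, Nat.choose_succ_self]
    simp [Rs]
  rw [Rs, hpad, ← Finset.sum_sub_distrib, Finset.mul_sum]
  refine Finset.sum_congr rfl fun t ht => ?_
  have ht' : t ≤ k + 1 := by have := mem_range.mp ht; omega
  have hts : ((t:ℚ)) * ((k+1).choose t : ℚ)
      = ((k:ℚ)+1) * (((k+1).choose t : ℚ) - (k.choose t : ℚ)) := by
    rcases t with _ | s
    · simp
    · have hc1 : ((k:ℚ)+1) * (k.choose s : ℚ) = ((k+1).choose (s+1) : ℚ) * ((s:ℚ)+1) := by
        have := Nat.add_one_mul_choose_eq k s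
        exact_mod_cast congrArg (fun y : ℕ => (y:ℚ)) this
      have hc2 : (((k+1).choose (s+1) : ℕ) : ℚ) = (k.choose s : ℚ) + (k.choose (s+1) : ℚ) := by
        exact_mod_cast congrArg (fun y : ℕ => (y:ℚ)) (Nat.choose_succ_succ k s)
      push_cast at hc1 hc2 ⊢
      linear_combination (-1:ℚ) * hc1 + (-(k:ℚ)-1) * hc2
  have hpow : (t:ℚ)^(n+1) = (t:ℚ)^n * t := by rw [pow_succ]
  rw [hpow]
  linear_combination ((-1:ℚ)^t * (t:ℚ)^n) * hts

lemma abel (n : ℕ) (N : ℕ) (hN : N ≤ n) :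
    ∑ k ∈ Icc 1 N, ((2:ℚ)^n - (2:ℚ)^(n-k)) * (Rs n (k+1) - Rs n k)
      = ((2:ℚ)^n - (2:ℚ)^(n-N)) * Rs n (N+1) - ∑ k ∈ Icc 1 N, (2:ℚ)^(n-k) * Rs n k := by
  induction N with
  | zero => simp
  | succ N ih =>
    have hN' : N ≤ n := by omega
    rw [Finset.sum_Icc_succ_top (by omega : 1 ≤ N+1), Finset.sum_Icc_succ_top (by omega : 1 ≤ N+1),
      ih hN']
    have hpow : (2:ℚ)^(n-N) = 2 * (2:ℚ)^(n-(N+1)) := by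
      have h : n - N = (n - (N+1)) + 1 := by omega
      rw [h, pow_succ]; ring
    rw [hpow]
    ring

lemma tail2 (t : ℕ) : ∀ n, t ≤ n →
    ∑ k ∈ Ico t (n+1), 2^(n-k) * (k.choose t) = ∑ i ∈ Ico (t+1) (n+2), (n+1).choose i := by
  intro n
  induction n with
  | zero =>
    intro ht
    interval_cases t
    simp
  | succ n ih =>
    intro ht
    rcases Nat.eq_or_lt_of_le ht with rfl | hlt
    · simp [Nat.Ico_succ_singleton, Nat.choose_self, Nat.sub_self]
    · have ht' : t ≤ n := by omega
      have hL : ∑ k ∈ Ico t (n+2), 2^(n+1-k) * (k.choose t)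
          = 2 * (∑ k ∈ Ico t (n+1), 2^(n-k) * (k.choose t)) + (n+1).choose t := by
        rw [Finset.sum_Ico_succ_top (by omega : t ≤ n+1), Finset.mul_sum]
        have : 2^(n+1-(n+1)) * ((n+1).choose t) = (n+1).choose t := by simp
        rw [this]
        congr 1
        refine Finset.sum_congr rfl fun k hk => ?_
        have hk' : k < n + 1 := (mem_Ico.mp hk).2
        have : n + 1 - k = (n - k) + 1 := by omega
        rw [this, pow_succ]
        ring
      have hpascal : ∀ i, 1 ≤ i → (n+2).choose i = (n+1).choose i + (n+1).choose (i-1) := by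
        intro i hi
        obtain ⟨j, rfl⟩ : ∃ j, i = j + 1 := ⟨i - 1, by omega⟩
        simp [Nat.choose_succ_succ, Nat.add_comm]
      have hR : ∑ i ∈ Ico (t+1) (n+3), (n+2).choose i
          = 2 * (∑ i ∈ Ico (t+1) (n+2), (n+1).choose i) + (n+1).choose t := by
        rw [Finset.sum_congr rfl fun i hi => hpascal i (by have := (mem_Ico.mp hi).1; omega),
          Finset.sum_add_distrib]
        have h1 : ∑ i ∈ Ico (t+1) (n+3), (n+1).choose i
            = ∑ i ∈ Ico (t+1) (n+2), (n+1).choose i := by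
          rw [Finset.sum_Ico_succ_top (by omega : t+1 ≤ n+2), Nat.choose_succ_self, add_zero]
        have h2 : ∑ i ∈ Ico (t+1) (n+3), (n+1).choose (i-1)
            = (n+1).choose t + ∑ i ∈ Ico (t+1) (n+2), (n+1).choose i := by
          rw [Finset.sum_Ico_eq_sum_range]
          have h3 : ∑ i ∈ Ico (t+1) (n+2), (n+1).choose i
              = ∑ r ∈ range (n+1-t), (n+1).choose (t+1+r) := by
            rw [Finset.sum_Ico_eq_sum_range]
            have : n + 2 - (t+1) = n + 1 - t := by omega
            rw [this]
          rw [h3]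
          have h4 : n + 3 - (t+1) = (n+1-t) + 1 := by omega
          rw [h4, Finset.sum_range_succ']
          have h5 : ∀ r, (n+1).choose (t+1+(r+1)-1) = (n+1).choose (t+1+r) := by
            intro r; rfl
          rw [Finset.sum_congr rfl fun r _ => h5 r]
          have h6 : (n+1).choose (t+1+0-1) = (n+1).choose t := by norm_num
          rw [h6]
          exact Nat.add_comm _ _
        rw [h1, h2]
        ring
      rw [hL, hR, ih ht']

lemma Zs_W (n : ℕ) (hn : 1 ≤ n) : Zs n = ∑ k ∈ Icc 1 n, (2:ℚ)^(n-k) * Rs n k := by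
  have hIcc : (Icc 1 n) = Ico 1 (n+1) := by rw [Finset.Ico_add_one_right_eq_Icc]
  have h0 : ∑ k ∈ Ico 0 (n+1), (2:ℚ)^(n-k) * Rs n k = ∑ k ∈ Ico 1 (n+1), (2:ℚ)^(n-k) * Rs n k := by
    have h00 : Rs n 0 = 0 := by
      rw [Rs]
      simp [zero_pow (show n ≠ 0 by omega)]
    rw [Finset.sum_eq_sum_Ico_succ_bot (by omega : 0 < n+1), h00, mul_zero, zero_add]
  rw [hIcc, ← h0]
  have hexp : ∑ k ∈ Ico 0 (n+1), (2:ℚ)^(n-k) * Rs n k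
      = ∑ k ∈ Ico 0 (n+1), ∑ t ∈ Ico 0 (k+1), (-1:ℚ)^t * (t:ℚ)^n * ((2:ℚ)^(n-k) * (k.choose t : ℚ)) := by
    refine Finset.sum_congr rfl fun k _ => ?_
    rw [Rs, Finset.mul_sum, Nat.Ico_zero_eq_range]
    exact Finset.sum_congr rfl fun t _ => by ring
  rw [hexp, ← Finset.sum_Ico_Ico_comm 0 (n+1)
    (fun t k => (-1:ℚ)^t * (t:ℚ)^n * ((2:ℚ)^(n-k) * (k.choose t : ℚ)))]
  rw [← Zs_alt n, Nat.Ico_zero_eq_range]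
  refine Finset.sum_congr rfl fun t ht => ?_
  have ht' : t ≤ n := by have := mem_range.mp ht; omega
  have htail := tail2 t n ht'
  have htailq : ∑ k ∈ Ico t (n+1), (2:ℚ)^(n-k) * (k.choose t : ℚ)
      = ∑ i ∈ Ico (t+1) (n+2), ((n+1).choose i : ℚ) := by
    have := congrArg (fun y : ℕ => (y:ℚ)) htail
    push_cast at this
    convert this using 2 <;> push_cast <;> ring_nf
  rw [← Finset.mul_sum, htailq]

lemma C_eq (n : ℕ) (hn : 1 ≤ n) : C n n = - Zs n := by
  rw [C, Nat.sub_self, pow_zero, one_mul]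
  have step1 : ∀ k ∈ Icc 1 n,
      (((2:ℚ)^n - (2:ℚ)^(n-k)) / ((k:ℚ) + 1)) *
        (∑ t ∈ range (k+2), (-1:ℚ)^t * ((k+1).choose t : ℚ) * (t:ℚ)^(n+1))
      = ((2:ℚ)^n - (2:ℚ)^(n-k)) * (Rs n (k+1) - Rs n k) := by
    intro k _
    rw [Tk n k]
    have hk : ((k:ℚ) + 1) ≠ 0 := by positivity
    field_simp
  rw [Finset.sum_congr rfl step1, abel n n le_rfl, Nat.sub_self, pow_zero, Rs_top, Zs_W n hn]
  ring

end Tan6Aux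

/-- For every natural number `n ≥ 1`, `S(n,n) = C(n,n)`. -/
theorem stmt_6 (n : ℕ) (hn : 1 ≤ n) : S n n = C n n := by
  rw [Tan6Aux.S_eq n hn, Tan6Aux.C_eq n hn]
  rcases Nat.even_or_odd n with he | ho
  · rw [Tan6Aux.Zs_eq n hn, Tan6Aux.qf_neg_one n hn he]
    ring
  · rw [ho.neg_one_pow]
    ring
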